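/- The involution ρ preserves the first letter and the descent number: for all π ∈ S_n, F(ρ(π)) = F(π) and des(ρ(π)) = des(π). -/

import Mathlib

namespace BS

/-- `l` is (the one-line notation of) a permutation of `{1,...,n}`. -/
def isPerm (l : List ℕ) (n : ℕ) : Prop := l.Perm ((List.range n).map (· + 1))

/-- number of inversions -/
def inv (l : List ℕ) : ℕ :=
  ((Finset.range l.length ×ˢ Finset.range l.length).filter
    (fun p => p.1 < p.2 ∧ l.getD p.2 0 < l.getD p.1 0)).card

/-- the set of (0-indexed) descent positions -/
def desSet (l : List ℕ) : Finset ℕ :=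
  (Finset.range (l.length - 1)).filter (fun i => l.getD (i + 1) 0 < l.getD i 0)

def des (l : List ℕ) : ℕ := (desSet l).card

/-- major index: sum of the (1-indexed) descent positions -/
def maj (l : List ℕ) : ℕ := ∑ i ∈ desSet l, (i + 1)

/-- number of occurrences of the generalized pattern ac-b (132, first two letters adjacent) -/
def acb (l : List ℕ) : ℕ :=
  ((Finset.range l.length ×ˢ Finset.range l.length).filter
    (fun p => p.1 + 2 ≤ p.2 ∧ l.getD p.1 0 < l.getD p.2 0 ∧ l.getD p.2 0 < l.getD (p.1 + 1) 0)).card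

/-- number of occurrences of the generalized pattern ba-c (213, first two letters adjacent) -/
def bac (l : List ℕ) : ℕ :=
  ((Finset.range l.length ×ˢ Finset.range l.length).filter
    (fun p => p.1 + 2 ≤ p.2 ∧ l.getD (p.1 + 1) 0 < l.getD p.1 0 ∧ l.getD p.1 0 < l.getD p.2 0)).card

/-- number of occurrences of the generalized pattern cb-a (321, first two letters adjacent) -/
def cba (l : List ℕ) : ℕ :=
  ((Finset.range l.length ×ˢ Finset.range l.length).filter
    (fun p => p.1 + 2 ≤ p.2 ∧ l.getD p.2 0 < l.getD (p.1 + 1) 0 ∧ l.getD (p.1 + 1) 0 < l.getD p.1 0)).card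

/-- Babson–Steingrímsson's statistic stat = (ac-b)+(ba-c)+(cb-a)+(ba) -/
def stat (l : List ℕ) : ℕ := acb l + bac l + cba l + des l

/-- first letter -/
def F (l : List ℕ) : ℕ := l.headD 0

/-- insertion space `j` (i.e. between letters `j-1` and `j`, 0-indexed) is a descent space -/
def isDescSpace (σ : List ℕ) (j : ℕ) : Prop :=
  1 ≤ j ∧ j < σ.length ∧ σ.getD j 0 < σ.getD (j - 1) 0

instance (σ : List ℕ) (j : ℕ) : Decidable (isDescSpace σ j) := by
  unfold isDescSpace; infer_instance

def isAscSpace (σ : List ℕ) (j : ℕ) : Prop :=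
  1 ≤ j ∧ j < σ.length ∧ σ.getD (j - 1) 0 < σ.getD j 0

instance (σ : List ℕ) (j : ℕ) : Decidable (isAscSpace σ j) := by
  unfold isAscSpace; infer_instance

/-- maj-labeling of the insertion spaces `0,...,σ.length`: the final space gets `0`,
descent spaces get `1,...,des σ` from right to left, the remaining spaces get
`des σ + 1, ...` from left to right. -/
def majLabel (σ : List ℕ) (j : ℕ) : ℕ :=
  if j = σ.length then 0
  else if isDescSpace σ j then
    1 + ((Finset.Ico (j + 1) σ.length).filter (fun t => isDescSpace σ t)).card
  else des σ + 1 + ((Finset.range j).filter (fun t => ¬ isDescSpace σ t)).card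

/-- stat-labeling of the insertion spaces: descent spaces and the final space get
`0,...,des σ` from left to right, the initial space gets `des σ + 1`, and ascent
spaces get `des σ + 2, ...` from right to left. -/
def statLabel (σ : List ℕ) (j : ℕ) : ℕ :=
  if j = σ.length then des σ
  else if isDescSpace σ j then ((Finset.range j).filter (fun t => isDescSpace σ t)).card
  else if j = 0 then des σ + 1
  else des σ + 1 + ((Finset.Ico j σ.length).filter (fun t => isAscSpace σ t)).card

/-- index of the insertion space carrying label `i` in the labeling `lab` -/
def spaceOfLabel (lab : List ℕ → ℕ → ℕ) (σ : List ℕ) (i : ℕ) : ℕ :=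
  ((List.range (σ.length + 1)).find? (fun j => decide (lab σ j = i))).getD 0

/-- insert `v` at the space with inv-label `i` (spaces labeled from right to left) -/
def insertAtInvLabel (i : ℕ) (σ : List ℕ) (v : ℕ) : List ℕ :=
  σ.insertIdx (σ.length - i) v

def insertAtMajLabel (i : ℕ) (σ : List ℕ) (v : ℕ) : List ℕ :=
  σ.insertIdx (spaceOfLabel majLabel σ i) v

def insertAtStatLabel (i : ℕ) (σ : List ℕ) (v : ℕ) : List ℕ :=
  σ.insertIdx (spaceOfLabel statLabel σ i) v

/-- inversion table: `c_i` is the inv-label of the space of `π⁽ⁱ⁻¹⁾` that letter `i` occupies -/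
def invTable (π : List ℕ) : List ℕ :=
  (List.range π.length).map (fun k =>
    if k = 0 then 0
    else (π.filter (· ≤ k)).length - (π.filter (· ≤ k + 1)).idxOf (k + 1))

/-- major index table -/
def majTable (π : List ℕ) : List ℕ :=
  (List.range π.length).map (fun k =>
    if k = 0 then 0
    else majLabel (π.filter (· ≤ k)) ((π.filter (· ≤ k + 1)).idxOf (k + 1)))

/-- stat table -/
def statTable (π : List ℕ) : List ℕ :=
  (List.range π.length).map (fun k =>
    if k = 0 then 0
    else statLabel (π.filter (· ≤ k)) ((π.filter (· ≤ k + 1)).idxOf (k + 1)))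

/-- `w ∈ E_n`, i.e. `w = w₁⋯wₙ` with `0 ≤ wᵢ ≤ i - 1` -/
def memE (w : List ℕ) (n : ℕ) : Prop :=
  w.length = n ∧ ∀ k < n, w.getD k 0 ≤ k

/-- the map ρ : complement-reverse `π⁽ᵏ⁾` (k the first letter) behind its first letter,
then reinsert `k+1,…,n` at the maj-labels given by the stat table of `π`. -/
def rho (π : List ℕ) : List ℕ :=
  let n := π.length
  let k := π.headD 0
  let s := statTable π
  (List.range (n - k)).foldl
    (fun σ m => insertAtMajLabel (s.getD (k + m) 0) σ (k + m + 1))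
    (k :: (((π.filter (· ≤ k)).tail.map (fun x => k - x)).reverse))

/-- the finset of one-line notations of permutations of `{1,…,n}` -/
def perms (n : ℕ) : Finset (List ℕ) :=
  (((List.range n).map (· + 1)).permutations).toFinset

/-- the q-factorial `[n]_q!` -/
def qFact {R : Type*} [CommSemiring R] (q : R) (n : ℕ) : R :=
  ∏ k ∈ Finset.range n, ∑ j ∈ Finset.range (k + 1), q ^ j

theorem card_filter_shift (P : ℕ → Prop) [DecidablePred P] (m : ℕ) :
    ((Finset.Ico 1 (m+1)).filter P).card = ((Finset.range m).filter (fun i => P (i+1))).card := by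
  apply Finset.card_nbij' (fun x => x - 1) (fun x => x + 1)
  · intro a ha
    simp only [Finset.mem_filter, Finset.mem_Ico, Finset.mem_coe] at ha
    simp only [Finset.mem_filter, Finset.mem_range, Finset.mem_coe]
    obtain ⟨⟨h1, h2⟩, h3⟩ := ha
    have : a - 1 + 1 = a := by omega
    rw [this]
    exact ⟨by omega, h3⟩
  · intro a ha
    simp only [Finset.mem_filter, Finset.mem_range, Finset.mem_coe] at ha
    simp only [Finset.mem_filter, Finset.mem_Ico, Finset.mem_coe]
    exact ⟨⟨by omega, by omega⟩, ha.2⟩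
  · intro a ha
    simp only [Finset.mem_filter, Finset.mem_Ico, Finset.mem_coe] at ha
    dsimp only
    omega
  · intro a _; dsimp only; omega
theorem card_filter_range_succ' (P : ℕ → Prop) [DecidablePred P] (m : ℕ) :
    ((Finset.range (m+1)).filter P).card
      = (if P 0 then 1 else 0) + ((Finset.range m).filter (fun i => P (i+1))).card := by
  have hsplit : Finset.range (m+1) = {0} ∪ Finset.Ico 1 (m+1) := by
    ext x; simp [Finset.mem_Ico, Nat.lt_succ_iff]; omega
  have hdisj : Disjoint ((({0} : Finset ℕ)).filter P) ((Finset.Ico 1 (m+1)).filter P) := by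
    simp [Finset.disjoint_left]
  rw [hsplit, Finset.filter_union, Finset.card_union_of_disjoint hdisj, card_filter_shift]
  congr 1
  by_cases h : P 0 <;> simp [Finset.filter_singleton, h]
theorem des_nil : des [] = 0 := by simp [des, desSet]
theorem des_singleton (a : ℕ) : des [a] = 0 := by simp [des, desSet]
theorem des_cons_cons (a b : ℕ) (t : List ℕ) :
    des (a :: b :: t) = (if b < a then 1 else 0) + des (b :: t) := by
  unfold des desSet
  have h1 : (a :: b :: t).length - 1 = ((b :: t).length - 1) + 1 := by simp
  rw [h1, card_filter_range_succ']
  congr 1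
theorem descSpace_cons_succ_succ (a : ℕ) (t : List ℕ) (m : ℕ) :
    isDescSpace (a :: t) (m + 2) ↔ isDescSpace t (m + 1) := by
  unfold isDescSpace
  rw [show m + 2 - 1 = m + 1 from rfl, List.getD_cons_succ, List.getD_cons_succ,
    show m + 1 - 1 = m from rfl]
  simp only [List.length_cons]
  constructor
  · rintro ⟨h1, h2, h3⟩
    exact ⟨by omega, by omega, h3⟩
  · rintro ⟨h1, h2, h3⟩
    exact ⟨by omega, by omega, h3⟩
theorem descSpace_cons_one (a b : ℕ) (r : List ℕ) :
    isDescSpace (a :: b :: r) 1 ↔ b < a := by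
  simp [isDescSpace, List.getD]
theorem des_insertIdx (σ : List ℕ) (m v : ℕ) (hv : ∀ x ∈ σ, x < v) (hm : m ≤ σ.length) :
    des (σ.insertIdx m v) = des σ + (if m = σ.length ∨ isDescSpace σ m then 0 else 1) := by
  induction σ generalizing m with
  | nil =>
    have h0 : m = 0 := by simpa using hm
    subst h0
    simp [List.insertIdx, des_singleton, des_nil]
  | cons a t ih =>
    match m with
    | 0 =>
      have ha : a < v := hv a (by simp)
      match t with
      | [] => simp [List.insertIdx, des_cons_cons, des_singleton, isDescSpace, ha]
      | b :: r =>
        rw [show List.insertIdx (a::b::r) 0 v = v :: a :: b :: r from rfl]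
        rw [des_cons_cons, des_cons_cons (a := a)]
        have hneg : ¬(0 = (a :: b :: r).length ∨ isDescSpace (a :: b :: r) 0) := by
          simp [isDescSpace]
        rw [if_pos ha, if_neg hneg]
        omega
    | Nat.succ m =>
      rw [show (a::t).insertIdx (m+1) v = a :: t.insertIdx m v from rfl]
      match t with
      | [] =>
        have : m = 0 := by simpa using hm
        subst this
        have ha : a < v := hv a (by simp)
        simp [List.insertIdx, des_cons_cons, des_singleton, isDescSpace,
          Nat.not_lt.mpr (Nat.le_of_lt ha)]
      | b :: r =>
        match m with
        | 0 =>
          have ha : a < v := hv a (by simp)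
          have hb : b < v := hv b (by simp)
          rw [show List.insertIdx (b::r) 0 v = v :: b :: r from rfl]
          rw [des_cons_cons, des_cons_cons (b := b), des_cons_cons (a := a) (b := b)]
          have h1 : ¬ (1 = (a :: b :: r).length) := by simp
          rw [if_neg (by simp [Nat.not_lt.mpr (Nat.le_of_lt ha)]), if_pos hb]
          by_cases hba : b < a
          · rw [if_pos hba, if_pos (Or.inr ((descSpace_cons_one a b r).mpr hba))]
            omega
          · rw [if_neg hba, if_neg]
            · omega
            · rintro (h | h)
              · simp at h
              · exact hba ((descSpace_cons_one a b r).mp h)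
        | Nat.succ m =>
          rw [show (b::r).insertIdx (m+1) v = b :: r.insertIdx m v from rfl]
          rw [des_cons_cons, des_cons_cons (a := a) (b := b)]
          rw [show a :: b :: r = a :: (b :: r) from rfl] at hm ⊢
          have ihh := ih (m + 1) (fun x hx => hv x (by simp [hx])) (by simpa using hm)
          rw [show (b::r).insertIdx (m+1) v = b :: r.insertIdx m v from rfl] at ihh
          rw [ihh]
          have hdesc := descSpace_cons_succ_succ a (b :: r) m
          have hiff : (m + 1 + 1 = (a :: b :: r).length ∨ isDescSpace (a :: b :: r) (m + 1 + 1))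
              ↔ (m + 1 = (b :: r).length ∨ isDescSpace (b :: r) (m + 1)) := by
            constructor
            · rintro (h | h)
              · exact Or.inl (by simpa using h)
              · exact Or.inr (hdesc.mp h)
            · rintro (h | h)
              · exact Or.inl (by simp [h])
              · exact Or.inr (hdesc.mpr h)
          rw [if_congr hiff rfl rfl]
          omega
theorem des_eq_card (σ : List ℕ) :
    des σ = ((Finset.range σ.length).filter (fun t => isDescSpace σ t)).card := by
  unfold des desSet
  apply Finset.card_nbij' (fun i => i + 1) (fun j => j - 1)
  · intro a ha
    simp only [Finset.mem_filter, Finset.mem_range, Finset.mem_coe] at ha ⊢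
    exact ⟨by omega, by omega, by omega, by simpa using ha.2⟩
  · intro j hj
    simp only [Finset.mem_filter, Finset.mem_range, Finset.mem_coe] at hj ⊢
    obtain ⟨hj1, h1, h2, h3⟩ := hj
    constructor
    · omega
    · have : j - 1 + 1 = j := by omega
      rw [this]
      exact h3
  · intro a _; dsimp only; omega
  · intro j hj
    simp only [Finset.mem_filter, Finset.mem_range, Finset.mem_coe] at hj
    have := hj.2.1
    dsimp only
    omega
theorem desc_split (σ : List ℕ) (j : ℕ) (hj : j ≤ σ.length) :
    ((Finset.range j).filter (fun t => isDescSpace σ t)).card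
      + ((Finset.Ico j σ.length).filter (fun t => isDescSpace σ t)).card = des σ := by
  rw [des_eq_card]
  rw [← Finset.card_union_of_disjoint]
  · congr 1
    rw [← Finset.filter_union]
    congr 1
    ext x
    simp only [Finset.mem_union, Finset.mem_range, Finset.mem_Ico]
    omega
  · simp only [Finset.disjoint_left, Finset.mem_filter, Finset.mem_range, Finset.mem_Ico]
    rintro x ⟨hx, -⟩ ⟨⟨hx2, -⟩, -⟩
    omega
theorem des_le_length (σ : List ℕ) : des σ ≤ σ.length := by
  rw [des_eq_card]
  calc ((Finset.range σ.length).filter (fun t => isDescSpace σ t)).card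
      ≤ (Finset.range σ.length).card := Finset.card_filter_le _ _
    _ = σ.length := Finset.card_range _
theorem majLabel_eval_else (σ : List ℕ) (j : ℕ) (h1 : j ≠ σ.length) (h2 : ¬ isDescSpace σ j) :
    majLabel σ j = des σ + 1 + ((Finset.range j).filter (fun t => ¬ isDescSpace σ t)).card := by
  unfold majLabel
  rw [if_neg h1, if_neg h2]
theorem majLabel_desc_mem (σ : List ℕ) (j : ℕ) (h2 : isDescSpace σ j) :
    majLabel σ j = 1 + ((Finset.Ico (j + 1) σ.length).filter (fun t => isDescSpace σ t)).card ∧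
    1 ≤ majLabel σ j ∧ majLabel σ j ≤ des σ := by
  have h1 : j ≠ σ.length := by have := h2.2.1; omega
  have heval : majLabel σ j = 1 + ((Finset.Ico (j + 1) σ.length).filter (fun t => isDescSpace σ t)).card := by
    unfold majLabel; rw [if_neg h1, if_pos h2]
  refine ⟨heval, by omega, ?_⟩
  have hsplit := desc_split σ (j + 1) (by have := h2.2.1; omega)
  have hjmem : j ∈ (Finset.range (j + 1)).filter (fun t => isDescSpace σ t) := by
    simp [h2]
  have : 1 ≤ ((Finset.range (j + 1)).filter (fun t => isDescSpace σ t)).card :=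
    Finset.card_pos.mpr ⟨j, hjmem⟩
  omega
theorem majLabel_le_des_iff (σ : List ℕ) (j : ℕ) (hj : j ≤ σ.length) :
    majLabel σ j ≤ des σ ↔ (j = σ.length ∨ isDescSpace σ j) := by
  constructor
  · intro h
    by_contra hc
    push_neg at hc
    rw [majLabel_eval_else σ j hc.1 hc.2] at h
    omega
  · rintro (h | h)
    · unfold majLabel; rw [if_pos h]; omega
    · exact (majLabel_desc_mem σ j h).2.2
theorem majLabel_le_length (σ : List ℕ) (j : ℕ) (hj : j ≤ σ.length) :
    majLabel σ j ≤ σ.length := by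
  by_cases h1 : j = σ.length
  · unfold majLabel; rw [if_pos h1]; omega
  by_cases h2 : isDescSpace σ j
  · exact le_trans (majLabel_desc_mem σ j h2).2.2 (des_le_length σ)
  · rw [majLabel_eval_else σ j h1 h2]
    have hjlt : j < σ.length := lt_of_le_of_ne hj h1
    have hAB := Finset.card_filter_add_card_filter_not
      (s := Finset.range j) (p := fun t => isDescSpace σ t)
    have hsplit := desc_split σ j (le_of_lt hjlt)
    have hsub : (Finset.Ico j σ.length).filter (fun t => isDescSpace σ t)
        ⊆ Finset.Ico (j + 1) σ.length := by
      intro x hx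
      simp only [Finset.mem_filter, Finset.mem_Ico] at hx ⊢
      rcases hx with ⟨⟨hx1, hx2⟩, hx3⟩
      refine ⟨?_, hx2⟩
      rcases Nat.eq_or_lt_of_le hx1 with h | h
      · exact absurd (h ▸ hx3) h2
      · omega
    have hcard := Finset.card_le_card hsub
    rw [Nat.card_Ico] at hcard
    rw [Finset.card_range] at hAB
    omega
theorem majLabel_injOn (σ : List ℕ) (j1 j2 : ℕ) (h1 : j1 ≤ σ.length) (h2 : j2 ≤ σ.length)
    (heq : majLabel σ j1 = majLabel σ j2) : j1 = j2 := by
  -- helper facts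
  by_contra hne
  -- classify
  have key : ∀ a b : ℕ, a ≤ σ.length → b ≤ σ.length → a < b →
      majLabel σ a = majLabel σ b → False := by
    intro a b ha hb hab he
    have hbne : ¬ (a = σ.length) := by omega
    by_cases hda : isDescSpace σ a
    · have hma := (majLabel_desc_mem σ a hda).1
      by_cases hbl : b = σ.length
      · unfold majLabel at he
        rw [if_neg hbne, if_pos hda, if_pos hbl] at he
        omega
      by_cases hdb : isDescSpace σ b
      · -- both descents: counts differ
        have hmb := (majLabel_desc_mem σ b hdb).1
        have hsub : insert b ((Finset.Ico (b + 1) σ.length).filter (fun t => isDescSpace σ t))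
            ⊆ (Finset.Ico (a + 1) σ.length).filter (fun t => isDescSpace σ t) := by
          intro x hx
          rcases Finset.mem_insert.mp hx with rfl | hx
          · simp only [Finset.mem_filter, Finset.mem_Ico]
            exact ⟨⟨by omega, hdb.2.1⟩, hdb⟩
          · simp only [Finset.mem_filter, Finset.mem_Ico] at hx ⊢
            exact ⟨⟨by omega, hx.1.2⟩, hx.2⟩
        have hcard := Finset.card_le_card hsub
        rw [Finset.card_insert_of_notMem (by simp [Finset.mem_Ico])] at hcard
        omega
      · -- a descent, b not: labels in disjoint ranges
        have := (majLabel_desc_mem σ a hda).2.2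
        rw [majLabel_eval_else σ b hbl hdb] at he
        omega
    · -- a not descent (and a ≠ length)
      rw [majLabel_eval_else σ a hbne hda] at he
      by_cases hbl : b = σ.length
      · unfold majLabel at he
        rw [if_pos hbl] at he
        omega
      by_cases hdb : isDescSpace σ b
      · have := (majLabel_desc_mem σ b hdb).2.2
        have := (majLabel_desc_mem σ b hdb).1
        omega
      · rw [majLabel_eval_else σ b hbl hdb] at he
        have hsub : insert a ((Finset.range a).filter (fun t => ¬ isDescSpace σ t))
            ⊆ (Finset.range b).filter (fun t => ¬ isDescSpace σ t) := by
          intro x hx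
          rcases Finset.mem_insert.mp hx with rfl | hx
          · simp only [Finset.mem_filter, Finset.mem_range]
            exact ⟨hab, hda⟩
          · simp only [Finset.mem_filter, Finset.mem_range] at hx ⊢
            exact ⟨by omega, hx.2⟩
        have hcard := Finset.card_le_card hsub
        rw [Finset.card_insert_of_notMem (by simp)] at hcard
        omega
  rcases Nat.lt_or_ge j1 j2 with h | h
  · exact key j1 j2 h1 h2 h heq
  · exact key j2 j1 h2 h1 (by omega) heq.symm
theorem majLabel_surj (σ : List ℕ) (s : ℕ) (hs : s ≤ σ.length) :
    ∃ j, j ≤ σ.length ∧ majLabel σ j = s := by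
  have := Finset.surj_on_of_inj_on_of_card_le
    (s := Finset.range (σ.length + 1)) (t := Finset.range (σ.length + 1))
    (fun a _ => majLabel σ a)
    (fun a ha => by
      simp only [Finset.mem_range] at ha ⊢
      have := majLabel_le_length σ a (by omega)
      omega)
    (fun a1 a2 ha1 ha2 he => by
      simp only [Finset.mem_range] at ha1 ha2
      exact majLabel_injOn σ a1 a2 (by omega) (by omega) he)
    (le_refl _)
  obtain ⟨a, ha, hval⟩ := this s (by simp only [Finset.mem_range]; omega)
  exact ⟨a, by simpa using Nat.lt_succ_iff.mp (Finset.mem_range.mp ha), hval.symm⟩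
theorem descCount_Ico_one (σ : List ℕ) (h : 1 ≤ σ.length) :
    ((Finset.Ico 1 σ.length).filter (fun t => isDescSpace σ t)).card = des σ := by
  have := desc_split σ 1 h
  have h0 : ((Finset.range 1).filter (fun t => isDescSpace σ t)).card = 0 := by
    rw [Finset.card_eq_zero]
    ext x
    simp only [Finset.mem_filter, Finset.mem_range, Finset.notMem_empty, iff_false]
    rintro ⟨hx, hd⟩
    have := hd.1
    omega
  omega
theorem statLabel_le_des_of (σ : List ℕ) (j : ℕ) (hj : j ≤ σ.length)
    (h : j = σ.length ∨ isDescSpace σ j) : statLabel σ j ≤ des σ := by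
  rcases h with h | h
  · unfold statLabel; rw [if_pos h]
  · have hne : j ≠ σ.length := by have := h.2.1; omega
    unfold statLabel
    rw [if_neg hne, if_pos h]
    rw [des_eq_card]
    apply Finset.card_le_card
    intro x hx
    simp only [Finset.mem_filter, Finset.mem_range] at hx ⊢
    exact ⟨by have := h.2.1; omega, hx.2⟩
theorem statLabel_ge_of (σ : List ℕ) (j : ℕ) (hj1 : 1 ≤ j) (hj : j ≤ σ.length)
    (h : ¬ (j = σ.length ∨ isDescSpace σ j)) : des σ + 1 ≤ statLabel σ j := by
  push_neg at h
  unfold statLabel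
  rw [if_neg h.1, if_neg h.2, if_neg (by omega)]
  omega
theorem statLabel_ge_two_of (σ : List ℕ) (j : ℕ) (hnd : σ.Nodup) (hj1 : 1 ≤ j)
    (hj : j ≤ σ.length) (h : ¬ (j = σ.length ∨ isDescSpace σ j)) :
    des σ + 2 ≤ statLabel σ j := by
  push_neg at h
  unfold statLabel
  rw [if_neg h.1, if_neg h.2, if_neg (by omega)]
  have hjlt : j < σ.length := lt_of_le_of_ne hj h.1
  have hasc : isAscSpace σ j := by
    refine ⟨hj1, hjlt, ?_⟩
    have hlt1 : j - 1 < σ.length := by omega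
    rw [List.getD_eq_getElem σ 0 hjlt, List.getD_eq_getElem σ 0 hlt1]
    have hne : σ[j - 1] ≠ σ[j] := by
      intro hcontra
      have := (List.Nodup.getElem_inj_iff hnd).mp hcontra
      omega
    have hnotlt : ¬ (σ[j] < σ[j - 1]) := by
      intro hcontra
      exact h.2 ⟨hj1, hjlt, by
        rw [List.getD_eq_getElem σ 0 hjlt, List.getD_eq_getElem σ 0 hlt1]
        exact hcontra⟩
    omega
  have hmem : j ∈ (Finset.Ico j σ.length).filter (fun t => isAscSpace σ t) := by
    simp only [Finset.mem_filter, Finset.mem_Ico]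
    exact ⟨⟨le_refl _, hjlt⟩, hasc⟩
  have := Finset.card_pos.mpr ⟨j, hmem⟩
  omega
theorem statLabel_le_length (σ : List ℕ) (j : ℕ) (hj1 : 1 ≤ j) (hj : j ≤ σ.length) :
    statLabel σ j ≤ σ.length := by
  by_cases h : j = σ.length ∨ isDescSpace σ j
  · exact le_trans (statLabel_le_des_of σ j hj h) (des_le_length σ)
  push_neg at h
  unfold statLabel
  rw [if_neg h.1, if_neg h.2, if_neg (by omega)]
  have hlen1 : 1 ≤ σ.length := le_trans hj1 hj
  have hdc := descCount_Ico_one σ hlen1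
  have hAB := Finset.card_filter_add_card_filter_not
    (s := Finset.Ico 1 σ.length) (p := fun t => isDescSpace σ t)
  rw [Nat.card_Ico] at hAB
  have hsub : (Finset.Ico j σ.length).filter (fun t => isAscSpace σ t)
      ⊆ (Finset.Ico 1 σ.length).filter (fun t => ¬ isDescSpace σ t) := by
    intro x hx
    simp only [Finset.mem_filter, Finset.mem_Ico] at hx ⊢
    obtain ⟨⟨hx1, hx2⟩, hasc⟩ := hx
    refine ⟨⟨hasc.1, hx2⟩, ?_⟩
    intro hdesc
    have h1 := hasc.2.2
    have h2 := hdesc.2.2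
    omega
  have hcard := Finset.card_le_card hsub
  omega
theorem range_map_filter_length (n m : ℕ) :
    ((((List.range n).map (· + 1)).filter (fun x => x ≤ m)).length) = min m n := by
  induction n with
  | zero => simp
  | succ n ih =>
    rw [List.range_succ, List.map_append, List.filter_append, List.length_append, ih]
    by_cases h : n + 1 ≤ m <;> simp [h] <;> omega
theorem insertIdx_indexOf_filter_ne (L : List ℕ) (v : ℕ) (hnd : L.Nodup) (hv : v ∈ L) :
    (L.filter (fun x => x ≠ v)).insertIdx (L.idxOf v) v = L := by
  induction L with
  | nil => simp at hv
  | cons a L ih =>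
    by_cases hav : a = v
    · subst hav
      have hnotmem : a ∉ L := (List.nodup_cons.mp hnd).1
      have : L.filter (fun x => x ≠ a) = L := by
        apply List.filter_eq_self.mpr
        intro x hx
        simp only [ne_eq, decide_eq_true_eq]
        exact fun hxa => hnotmem (hxa ▸ hx)
      rw [show (a :: L).filter (fun x => x ≠ a) = L.filter (fun x => x ≠ a) by simp [List.filter_cons], this]
      simp
    · have h1 : (a :: L).idxOf v = L.idxOf v + 1 := by
        simp [List.idxOf_cons_ne _ hav]
      have h2 : (a :: L).filter (fun x => x ≠ v) = a :: L.filter (fun x => x ≠ v) := by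
        simp [List.filter_cons, hav]
      rw [h1, h2]
      rw [show (a :: L.filter (fun x => x ≠ v)).insertIdx (L.idxOf v + 1) v
          = a :: (L.filter (fun x => x ≠ v)).insertIdx (L.idxOf v) v from rfl]
      have hvL : v ∈ L := by
        rcases List.mem_cons.mp hv with h | h
        · exact absurd h.symm hav
        · exact h
      rw [ih (List.nodup_cons.mp hnd).2 hvL]
theorem des_append_singleton (u : List ℕ) (x : ℕ) :
    des (u ++ [x]) = des u + (match u.getLast? with
      | some y => if x < y then 1 else 0
      | none => 0) := by
  match u with
  | [] => simp [des_singleton, des_nil]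
  | [a] =>
    rw [show [a] ++ [x] = [a, x] from rfl, des_cons_cons, des_singleton, des_singleton]
    show (if x < a then 1 else 0) + 0 = 0 + (if x < a then 1 else 0)
    omega
  | a :: b :: r =>
    rw [show (a :: b :: r) ++ [x] = a :: ((b :: r) ++ [x]) from rfl]
    rw [show (b :: r) ++ [x] = b :: (r ++ [x]) from rfl]
    rw [des_cons_cons, des_cons_cons (t := r)]
    rw [show b :: (r ++ [x]) = (b :: r) ++ [x] from rfl]
    rw [des_append_singleton (b :: r) x]
    have h5 : (a :: b :: r).getLast? = (b :: r).getLast? := by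
      simp [List.getLast?_cons_cons]
    rw [h5]
    omega
theorem des_revcomp (c : ℕ) : ∀ (t : List ℕ), (∀ x ∈ t, x ≤ c) →
    des ((t.map (fun x => c - x)).reverse) = des t
  | [], _ => by simp [des_nil]
  | [a], _ => by simp [des_singleton]
  | a :: b :: r, h => by
    have ha : a ≤ c := h a (by simp)
    have hb : b ≤ c := h b (by simp)
    rw [des_cons_cons]
    rw [show (a :: b :: r).map (fun x => c - x) = (c - a) :: ((b :: r).map (fun x => c - x)) from rfl]
    rw [List.reverse_cons, des_append_singleton]
    rw [des_revcomp c (b :: r) (fun x hx => h x (by simp [hx]))]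
    have hlast : (((b :: r).map (fun x => c - x)).reverse).getLast? = some (c - b) := by
      rw [List.getLast?_reverse]
      rfl
    rw [hlast]
    have : (c - a < c - b) ↔ (b < a) := by omega
    simp only [this]
    omega
theorem spaceOfLabel_spec (σ : List ℕ) (s : ℕ) (hs : s ≤ σ.length) :
    spaceOfLabel majLabel σ s ≤ σ.length ∧ majLabel σ (spaceOfLabel majLabel σ s) = s := by
  obtain ⟨j, hj, hl⟩ := majLabel_surj σ s hs
  have hsome : ((List.range (σ.length + 1)).find? (fun j => decide (majLabel σ j = s))).isSome := by
    rw [List.find?_isSome]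
    exact ⟨j, by simp [List.mem_range]; omega, by simp [hl]⟩
  obtain ⟨j', hfind⟩ := Option.isSome_iff_exists.mp hsome
  have hval : majLabel σ j' = s := by
    have := List.find?_some hfind
    simpa using this
  have hmem : j' ≤ σ.length := by
    have := List.mem_of_find?_eq_some hfind
    simp [List.mem_range] at this
    omega
  unfold spaceOfLabel
  rw [hfind]
  exact ⟨hmem, hval⟩
theorem headD_insertIdx_pos (σ : List ℕ) (m v : ℕ) (hm : 1 ≤ m) :
    (σ.insertIdx m v).headD 0 = σ.headD 0 ∧ (σ ≠ [] → σ.insertIdx m v ≠ []) := by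
  match σ, m with
  | [], m =>
    rw [List.insertIdx_of_length_lt (by simp; omega)]
    simp
  | a :: t, (m+1) =>
    constructor
    · rfl
    · intro _
      exact List.cons_ne_nil _ _
theorem majLabel_zero (σ : List ℕ) (hσ : σ ≠ []) : majLabel σ 0 = des σ + 1 := by
  unfold majLabel
  rw [if_neg (by have := List.length_pos_iff.mpr hσ; omega), if_neg (by simp [isDescSpace])]
  simp
theorem maj_step (σ : List ℕ) (s v : ℕ) (hs : s ≤ σ.length) (hv : ∀ x ∈ σ, x < v)
    (hσ : σ ≠ []) (hs1 : s ≠ des σ + 1) :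
    (insertAtMajLabel s σ v).headD 0 = σ.headD 0 ∧ insertAtMajLabel s σ v ≠ [] ∧
    (insertAtMajLabel s σ v).length = σ.length + 1 ∧
    (∀ x ∈ insertAtMajLabel s σ v, x = v ∨ x ∈ σ) ∧
    des (insertAtMajLabel s σ v) = des σ + (if s ≤ des σ then 0 else 1) := by
  obtain ⟨hm1, hm2⟩ := spaceOfLabel_spec σ s hs
  set m' := spaceOfLabel majLabel σ s with hm'
  have hpos : 1 ≤ m' := by
    rcases Nat.eq_zero_or_pos m' with h0 | h0
    · exfalso
      rw [h0] at hm2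
      rw [majLabel_zero σ hσ] at hm2
      exact hs1 hm2.symm
    · exact h0
  have hhead := headD_insertIdx_pos σ m' v hpos
  refine ⟨hhead.1, hhead.2 hσ, List.length_insertIdx_of_le_length hm1 v, ?_, ?_⟩
  · intro x hx
    exact (List.mem_insertIdx hm1).mp hx
  · rw [show insertAtMajLabel s σ v = σ.insertIdx m' v from rfl]
    rw [des_insertIdx σ m' v hv hm1]
    congr 1
    have hiff : (m' = σ.length ∨ isDescSpace σ m') ↔ s ≤ des σ := by
      rw [← hm2]
      exact (majLabel_le_des_iff σ m' hm1).symm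
    rw [if_congr hiff rfl rfl]
theorem nodup_filter_le (π : List ℕ) (hnd : π.Nodup) (m : ℕ) : (π.filter (· ≤ m)).Nodup :=
  hnd.filter _
theorem step_main (n : ℕ) (π : List ℕ) (hperm : π.Perm ((List.range n).map (· + 1)))
    (i : ℕ) (hk1 : 1 ≤ π.headD 0) (hki : π.headD 0 < i) (hin : i ≤ n) :
    letI σ'' := π.filter (· ≤ i - 1)
    letI j := (π.filter (· ≤ i)).idxOf i
    letI s := statLabel σ'' j
    s ≤ σ''.length ∧ s ≠ des σ'' + 1 ∧
    des (π.filter (· ≤ i)) = des σ'' + (if s ≤ des σ'' then 0 else 1) := by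
  set σ'' := π.filter (· ≤ i - 1) with hσ''def
  set j := (π.filter (· ≤ i)).idxOf i with hjdef
  set s := statLabel σ'' j with hsdef
  have hlen : π.length = n := by simpa using hperm.length_eq
  have hnd : π.Nodup := by
    refine (hperm.nodup_iff).mpr ?_
    exact List.Nodup.map (fun a b hab => by omega) List.nodup_range
  have hmem : ∀ x, x ∈ π ↔ 1 ≤ x ∧ x ≤ n := by
    intro x
    rw [hperm.mem_iff]
    simp only [List.mem_map, List.mem_range]
    constructor
    · rintro ⟨a, ha, rfl⟩; omega
    · rintro ⟨h1, h2⟩; exact ⟨x - 1, by omega, by omega⟩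
  have hflen : ∀ m, (π.filter (· ≤ m)).length = min m n := by
    intro m
    rw [(hperm.filter (· ≤ m)).length_eq]
    exact range_map_filter_length n m
  -- π = k :: tail
  have hπne : π ≠ [] := by
    intro hc; rw [hc] at hlen; simp at hlen; omega
  obtain ⟨k', t', hcons⟩ := List.exists_cons_of_ne_nil hπne
  have hk' : π.headD 0 = k' := by rw [hcons]; rfl
  set k := π.headD 0 with hkdef
  have hi2 : 2 ≤ i := by omega
  have himem : i ∈ π.filter (· ≤ i) := by
    rw [List.mem_filter]
    exact ⟨(hmem i).mpr ⟨by omega, hin⟩, by simp⟩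
  have hLlen : (π.filter (· ≤ i)).length = i := by rw [hflen]; omega
  have hσlen : σ''.length = i - 1 := by
    show (π.filter (· ≤ i - 1)).length = i - 1
    rw [hflen]; omega
  -- j ≥ 1
  have hj1 : 1 ≤ j := by
    show 1 ≤ (π.filter (· ≤ i)).idxOf i
    rw [hcons]
    rw [List.filter_cons_of_pos (by simp; omega)]
    rw [List.idxOf_cons_ne _ (by rw [← hk', hkdef]; omega)]
    omega
  have hjlt : j < i := by
    have := List.idxOf_lt_length_iff.mpr himem
    rwa [hLlen] at this
  have hjle : j ≤ σ''.length := by omega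
  -- decomposition
  have hdecomp : σ''.insertIdx j i = π.filter (· ≤ i) := by
    have h1 := insertIdx_indexOf_filter_ne (π.filter (· ≤ i)) i (nodup_filter_le π hnd i) himem
    have h2 : (π.filter (· ≤ i)).filter (fun x => x ≠ i) = σ'' := by
      show _ = π.filter (· ≤ i - 1)
      rw [List.filter_filter]
      apply List.filter_congr
      intro x _
      by_cases hx1 : x ≤ i - 1 <;> by_cases hx2 : x = i <;> simp [hx1, hx2] <;> omega
    rw [h2] at h1
    exact h1
  have hentries : ∀ x ∈ σ'', x < i := by
    intro x hx
    have := List.of_mem_filter hx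
    simp at this
    omega
  have hdes := des_insertIdx σ'' j i hentries hjle
  rw [hdecomp] at hdes
  have hiff : (j = σ''.length ∨ isDescSpace σ'' j) ↔ s ≤ des σ'' := by
    constructor
    · intro hc
      exact statLabel_le_des_of σ'' j hjle hc
    · intro hc
      by_contra hnc
      have := statLabel_ge_of σ'' j hj1 hjle hnc
      omega
  refine ⟨statLabel_le_length σ'' j hj1 hjle, ?_, ?_⟩
  · by_cases hc : j = σ''.length ∨ isDescSpace σ'' j
    · have := statLabel_le_des_of σ'' j hjle hc
      omega
    · have := statLabel_ge_two_of σ'' j (nodup_filter_le π hnd _) hj1 hjle hc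
      omega
  · rw [hdes]
    congr 1
    rw [if_congr hiff rfl rfl]
theorem base_case (n : ℕ) (π : List ℕ) (hperm : π.Perm ((List.range n).map (· + 1)))
    (hn : 1 ≤ n) :
    letI k := π.headD 0
    letI σ₀ := k :: (((π.filter (· ≤ k)).tail.map (fun x => k - x)).reverse)
    σ₀.headD 0 = k ∧ σ₀ ≠ [] ∧ σ₀.length = k ∧ (∀ x ∈ σ₀, x ≤ k) ∧
      des σ₀ = des (π.filter (· ≤ k)) ∧ 1 ≤ k ∧ k ≤ n := by
  have hlen : π.length = n := by simpa using hperm.length_eq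
  have hnd : π.Nodup := by
    refine (hperm.nodup_iff).mpr ?_
    exact List.Nodup.map (fun a b hab => by omega) List.nodup_range
  have hmem : ∀ x, x ∈ π ↔ 1 ≤ x ∧ x ≤ n := by
    intro x
    rw [hperm.mem_iff]
    simp only [List.mem_map, List.mem_range]
    constructor
    · rintro ⟨a, ha, rfl⟩; omega
    · rintro ⟨h1, h2⟩; exact ⟨x - 1, by omega, by omega⟩
  have hflen : ∀ m, (π.filter (· ≤ m)).length = min m n := by
    intro m
    rw [(hperm.filter (· ≤ m)).length_eq]
    exact range_map_filter_length n m
  have hπne : π ≠ [] := by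
    intro hc; rw [hc] at hlen; simp at hlen; omega
  obtain ⟨k', t', hcons⟩ := List.exists_cons_of_ne_nil hπne
  have hk' : π.headD 0 = k' := by rw [hcons]; rfl
  set k := π.headD 0 with hkdef
  have hkmem : k' ∈ π := by rw [hcons]; simp
  have hkb : 1 ≤ k ∧ k ≤ n := by rw [hk']; exact (hmem k').mp hkmem
  have hfk : π.filter (· ≤ k) = k' :: (t'.filter (· ≤ k)) := by
    rw [hcons, List.filter_cons_of_pos (by simp [← hk', hkdef])]
  set t := t'.filter (· ≤ k) with htdef
  have htail : (π.filter (· ≤ k)).tail = t := by rw [hfk]; rfl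
  have htlen : t.length = k - 1 := by
    have := hflen k
    rw [hfk] at this
    simp at this
    omega
  have htent : ∀ x ∈ t, 1 ≤ x ∧ x < k := by
    intro x hx
    have hx1 : x ∈ t' := List.mem_of_mem_filter hx
    have hx2 : x ≤ k := by simpa using List.of_mem_filter hx
    have hx3 : x ∈ π := by rw [hcons]; exact List.mem_cons_of_mem _ hx1
    have hx4 : 1 ≤ x := ((hmem x).mp hx3).1
    have hx5 : x ≠ k' := by
      intro hcontra
      have : k' ∉ t' := (List.nodup_cons.mp (hcons ▸ hnd)).1
      exact this (hcontra ▸ hx1)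
    refine ⟨hx4, ?_⟩
    rw [hk']
    rcases Nat.lt_or_ge x k' with h | h
    · exact h
    · exact absurd (Nat.le_antisymm (by omega) h) hx5
  rw [htail]
  refine ⟨rfl, List.cons_ne_nil _ _, ?_, ?_, ?_, hkb.1, hkb.2⟩
  · simp [htlen]; omega
  · intro x hx
    rcases List.mem_cons.mp hx with rfl | hx
    · exact le_refl _
    · rw [List.mem_reverse, List.mem_map] at hx
      obtain ⟨y, _, rfl⟩ := hx
      omega
  · -- des equality
    rw [hfk]
    have hkk : k' = k := hk'.symm
    match t, htent with
    | [], _ => simp [des_singleton]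
    | b :: r, htent =>
      have hbk : b < k := (htent b (by simp)).2
      have hne2 : (((b :: r).map (fun x => k - x)).reverse) ≠ [] := by simp
      obtain ⟨c, w, hcw⟩ := List.exists_cons_of_ne_nil hne2
      have hck : c < k := by
        have hcmem : c ∈ ((b :: r).map (fun x => k - x)).reverse := by rw [hcw]; simp
        rw [List.mem_reverse, List.mem_map] at hcmem
        obtain ⟨y, hy, rfl⟩ := hcmem
        have := htent y hy
        omega
      rw [hcw, des_cons_cons, ← hcw, des_revcomp k (b :: r) (fun x hx => (htent x hx).2.le)]
      rw [hkk, des_cons_cons]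
      rw [if_pos hck, if_pos hbk]
theorem getD_map_range (f : ℕ → ℕ) (n i : ℕ) (hi : i < n) :
    (((List.range n).map f).getD i 0) = f i := by
  rw [List.getD_eq_getElem _ _ (by simpa using hi)]
  simp
theorem fold_inv (n : ℕ) (π : List ℕ) (hperm : π.Perm ((List.range n).map (· + 1)))
    (hn : 1 ≤ n) (m : ℕ) (hm : m ≤ n - π.headD 0) :
    letI k := π.headD 0
    letI σ := (List.range m).foldl
      (fun σ p => insertAtMajLabel ((statTable π).getD (k + p) 0) σ (k + p + 1))
      (k :: (((π.filter (· ≤ k)).tail.map (fun x => k - x)).reverse))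
    σ.headD 0 = k ∧ σ ≠ [] ∧ σ.length = k + m ∧ (∀ x ∈ σ, x ≤ k + m) ∧
      des σ = des (π.filter (· ≤ k + m)) := by
  have hbase := base_case n π hperm hn
  obtain ⟨hb1, hb2, hb3, hb4, hb5, hk1, hkn⟩ := hbase
  have hlen : π.length = n := by simpa using hperm.length_eq
  induction m with
  | zero =>
    simp only [List.range_zero, List.foldl_nil, Nat.add_zero]
    exact ⟨hb1, hb2, by omega, hb4, hb5⟩
  | succ m ih =>
    obtain ⟨ih1, ih2, ih3, ih4, ih5⟩ := ih (by omega)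
    set k := π.headD 0 with hkdef
    rw [List.range_succ, List.foldl_append, List.foldl_cons, List.foldl_nil]
    set σm := (List.range m).foldl
      (fun σ p => insertAtMajLabel ((statTable π).getD (k + p) 0) σ (k + p + 1))
      (k :: (((π.filter (· ≤ k)).tail.map (fun x => k - x)).reverse)) with hσm
    -- evaluate the stat table entry
    have hkm : k + m < n := by omega
    have hsval : (statTable π).getD (k + m) 0
        = statLabel (π.filter (· ≤ k + m)) ((π.filter (· ≤ k + m + 1)).idxOf (k + m + 1)) := by
      unfold statTable
      rw [hlen, getD_map_range _ n (k + m) hkm]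
      rw [if_neg (by omega)]
    set s := (statTable π).getD (k + m) 0 with hsdef
    -- stat side
    have hstep := step_main n π hperm (k + m + 1) hk1 (by omega) (by omega)
    simp only [Nat.add_sub_cancel] at hstep
    rw [← hsval] at hstep
    obtain ⟨hst1, hst2, hst3⟩ := hstep
    -- lengths agree
    have hflen : (π.filter (· ≤ k + m)).length = k + m := by
      rw [(hperm.filter (· ≤ k + m)).length_eq, range_map_filter_length]
      omega
    have hslen : s ≤ σm.length := by omega
    have hsne : s ≠ des σm + 1 := by rw [ih5]; exact hst2
    -- maj side
    have hmaj := maj_step σm s (k + m + 1) hslen (fun x hx => by have := ih4 x hx; omega) ih2 hsne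
    obtain ⟨hm1, hm2, hm3, hm4, hm5⟩ := hmaj
    refine ⟨by rw [hm1]; exact ih1, hm2, by omega, ?_, ?_⟩
    · intro x hx
      rcases hm4 x hx with rfl | hx2
      · omega
      · have := ih4 x hx2
        omega
    · rw [hm5, ih5]
      exact hst3.symm
theorem rho_main (n : ℕ) (π : List ℕ) (hπ : isPerm π n) :
    F (rho π) = F π ∧ des (rho π) = des π := by
  have hperm : π.Perm ((List.range n).map (· + 1)) := hπ
  rcases Nat.eq_zero_or_pos n with rfl | hn
  · have hnil : π = [] := by
      have : π.Perm [] := by simpa using hperm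
      exact List.perm_nil.mp this
    subst hnil
    constructor
    · rfl
    · decide
  · have hlen : π.length = n := by simpa using hperm.length_eq
    have hmem : ∀ x, x ∈ π → x ≤ n := by
      intro x hx
      rw [hperm.mem_iff] at hx
      simp only [List.mem_map, List.mem_range] at hx
      obtain ⟨a, ha, rfl⟩ := hx
      omega
    have hfiltn : π.filter (· ≤ n) = π := by
      apply List.filter_eq_self.mpr
      intro x hx
      simpa using hmem x hx
    obtain ⟨h1, h2, h3, h4, h5⟩ := fold_inv n π hperm hn (n - π.headD 0) (le_refl _)
    have hkn : π.headD 0 ≤ n := (base_case n π hperm hn).2.2.2.2.2.2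
    have hkk : π.headD 0 + (n - π.headD 0) = n := by omega
    rw [hkk] at h5
    rw [hfiltn] at h5
    have hrho : rho π = (List.range (n - π.headD 0)).foldl
        (fun σ m => insertAtMajLabel ((statTable π).getD (π.headD 0 + m) 0) σ (π.headD 0 + m + 1))
        (π.headD 0 :: (((π.filter (· ≤ π.headD 0)).tail.map (fun x => π.headD 0 - x)).reverse)) := by
      simp only [rho, hlen]
    rw [hrho]
    exact ⟨h1, h5⟩

end BS
/-- ρ preserves the first letter and the descent number. -/
theorem rho_preserves_F_des (n : ℕ) (π : List ℕ) (hπ : BS.isPerm π n) :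
    BS.F (BS.rho π) = BS.F π ∧ BS.des (BS.rho π) = BS.des π :=
  BS.rho_main n π hπ
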